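/- Let K and K₀ be stabilizing feedback matrices for the pair (A,B), with value functions V = dlyap(A+BK, S + KᵀRK) and V₀ = dlyap(A+BK₀, S + K₀ᵀRK₀), where S is positive definite and R positive semidefinite. If V ⪯ V₀, then for all k ≥ 0, ‖(A+BK)^k‖ ≤ √(λ_max(V₀)/λ_min(S)) · (1 − λ_min(V₀^{-1} S))^{k/2}. -/

import Mathlib

open Matrix MeasureTheory ProbabilityTheory
open scoped Classical RealInnerProductSpace

/-- Operator (spectral) norm of a real matrix. -/
noncomputable def opNorm {m n : Type*} [Fintype m] [Fintype n] [DecidableEq n]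
    (A : Matrix m n ℝ) : ℝ :=
  ‖LinearMap.toContinuousLinearMap (Matrix.toEuclideanLin A)‖

/-- Frobenius norm of a real matrix. -/
noncomputable def frob {m n : Type*} [Fintype m] [Fintype n] (A : Matrix m n ℝ) : ℝ :=
  Real.sqrt (∑ i, ∑ j, (A i j) ^ 2)

/-- Positive semidefinite square root (junk value `0` off the PSD matrices). -/
noncomputable def sqrtPD {n : Type*} [Fintype n] [DecidableEq n]
    (A : Matrix n n ℝ) : Matrix n n ℝ :=
  if h : A.PosSemidef then
    (h.1.eigenvectorUnitary : Matrix n n ℝ) * Matrix.diagonal (Real.sqrt ∘ h.1.eigenvalues) *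
      (star (h.1.eigenvectorUnitary : Matrix n n ℝ))
  else 0

/-- Matrix logarithm of a hermitian matrix via the spectral theorem
(junk value `0` off the hermitian matrices). -/
noncomputable def mlog {n : Type*} [Fintype n] [DecidableEq n]
    (A : Matrix n n ℝ) : Matrix n n ℝ :=
  if h : A.IsHermitian then
    (h.eigenvectorUnitary : Matrix n n ℝ) * Matrix.diagonal (Real.log ∘ h.eigenvalues) *
      (star (h.eigenvectorUnitary : Matrix n n ℝ))
  else 0

/-- Thompson (invariant) metric `δ∞(A,B) = ‖log (A^{-1/2} B A^{-1/2})‖`. -/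
noncomputable def thompson {n : Type*} [Fintype n] [DecidableEq n]
    (A B : Matrix n n ℝ) : ℝ :=
  opNorm (mlog ((sqrtPD A)⁻¹ * B * (sqrtPD A)⁻¹))

/-- Largest (real) eigenvalue. -/
noncomputable def lamMax {n : Type*} [Fintype n] [DecidableEq n] (A : Matrix n n ℝ) : ℝ :=
  sSup (spectrum ℝ A)

/-- Smallest (real) eigenvalue. -/
noncomputable def lamMin {n : Type*} [Fintype n] [DecidableEq n] (A : Matrix n n ℝ) : ℝ :=
  sInf (spectrum ℝ A)

/-- Solution `P = Σ_{k≥0} (Lᵀ)^k M L^k` of the discrete Lyapunov equation `P = Lᵀ P L + M`. -/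
noncomputable def dlyap {n : Type*} [Fintype n] [DecidableEq n]
    (L M : Matrix n n ℝ) : Matrix n n ℝ :=
  ∑' k : ℕ, (L ^ k)ᵀ * M * (L ^ k)

/-- `K` stabilizes `(A,B)`: the closed loop matrix `A + BK` has spectral radius `< 1`. -/
def Stabilizes {n d : Type*} [Fintype n] [DecidableEq n] [Fintype d]
    (A : Matrix n n ℝ) (B : Matrix n d ℝ) (K : Matrix d n ℝ) : Prop :=
  ∀ z ∈ spectrum ℂ ((A + B * K).map ((↑) : ℝ → ℂ)), ‖z‖ < 1

section AuxPow
open Filter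

section PowBound
attribute [local instance] Matrix.linftyOpSeminormedAddCommGroup Matrix.linftyOpNormedAddCommGroup Matrix.linftyOpNormedRing
  Matrix.linftyOpNormedAlgebra

variable {N : ℕ}

lemma entry_nnnorm_le {m l : Type*} [Fintype m] [Fintype l] {α : Type*}
    [SeminormedAddCommGroup α] (A : Matrix m l α) (i : m) (j : l) : ‖A i j‖₊ ≤ ‖A‖₊ := by
  rw [Matrix.linfty_opNNNorm_def]
  exact le_trans (Finset.single_le_sum (f := fun j => ‖A i j‖₊) (by simp) (Finset.mem_univ j))
    (Finset.le_sup (f := fun i => ∑ j, ‖A i j‖₊) (Finset.mem_univ i))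

lemma pow_bound (L : Matrix (Fin N) (Fin N) ℝ)
    (hL : ∀ z ∈ spectrum ℂ (L.map ((↑) : ℝ → ℂ)), ‖z‖ < 1) :
    ∃ t : ℝ, 0 ≤ t ∧ t < 1 ∧ ∀ᶠ k in atTop, ‖L ^ k‖ ≤ t ^ k := by
  set a : Matrix (Fin N) (Fin N) ℂ := L.map ((↑) : ℝ → ℂ) with ha
  have hρ : spectralRadius ℂ a < 1 := by
    rcases (spectrum ℂ a).eq_empty_or_nonempty with h | h
    · simp [spectralRadius, h]
    · have := spectrum.spectralRadius_lt_of_forall_lt_of_nonempty h (r := 1)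
        (fun z hz => by have h' := hL z hz; rw [← coe_nnnorm] at h'; exact_mod_cast h')
      simpa using this
  obtain ⟨r, hρr, hr1⟩ := ENNReal.lt_iff_exists_nnreal_btwn.mp hρ
  have hgel := spectrum.pow_nnnorm_pow_one_div_tendsto_nhds_spectralRadius a
  have hev : ∀ᶠ k : ℕ in atTop, (‖a ^ k‖₊ : ENNReal) ^ (1 / (k : ℝ)) < (r : ENNReal) :=
    hgel.eventually_lt_const hρr
  have hr1' : (r : ℝ) < 1 := by exact_mod_cast hr1
  refine ⟨(r : ℝ), r.coe_nonneg, hr1', ?_⟩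
  filter_upwards [hev, eventually_ge_atTop 1] with k hk hk1
  have hkne : (k : ℝ) ≠ 0 := Nat.cast_ne_zero.mpr (by omega)
  have h1 : ((‖a ^ k‖₊ : ENNReal) ^ (1 / (k : ℝ))) ^ (k : ℝ) ≤ (r : ENNReal) ^ (k : ℝ) :=
    ENNReal.rpow_le_rpow hk.le (by positivity)
  rw [← ENNReal.rpow_mul, one_div, inv_mul_cancel₀ hkne, ENNReal.rpow_one,
    ENNReal.rpow_natCast] at h1
  have h3 : ‖a ^ k‖₊ ≤ r ^ k := by exact_mod_cast h1
  have h4 : ‖a ^ k‖ ≤ (r : ℝ) ^ k := by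
    calc ‖a ^ k‖ = ((‖a ^ k‖₊ : NNReal) : ℝ) := rfl
      _ ≤ ((r ^ k : NNReal) : ℝ) := by exact_mod_cast h3
      _ = (r : ℝ) ^ k := by push_cast; ring
  have hnn : ‖a ^ k‖₊ = ‖L ^ k‖₊ := by
    have hmap : a ^ k = (L ^ k).map ((↑) : ℝ → ℂ) := by
      have h : a = Complex.ofRealHom.mapMatrix L := rfl
      rw [h, ← map_pow]; rfl
    rw [hmap, Matrix.linfty_opNNNorm_def, Matrix.linfty_opNNNorm_def]
    congr 1
    ext i
    congr 1
    ext j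
    simp [Matrix.map_apply]
  have : ‖L ^ k‖ = ‖a ^ k‖ := congrArg NNReal.toReal hnn.symm
  linarith
end PowBound


section Dlyap
attribute [local instance] Matrix.linftyOpSeminormedAddCommGroup Matrix.linftyOpNormedAddCommGroup
  Matrix.linftyOpNormedRing Matrix.linftyOpNormedAlgebra

variable {N : ℕ}

/-- transpose as a linear map -/
def transposeLM : Matrix (Fin N) (Fin N) ℝ →ₗ[ℝ] Matrix (Fin N) (Fin N) ℝ where
  toFun X := Xᵀ
  map_add' X Y := transpose_add X Y
  map_smul' c X := transpose_smul c X

/-- quadratic evaluation as a linear map -/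
def quadLM (x : Fin N → ℝ) : Matrix (Fin N) (Fin N) ℝ →ₗ[ℝ] ℝ where
  toFun X := x ⬝ᵥ (X *ᵥ x)
  map_add' X Y := by simp [add_mulVec, dotProduct_add]
  map_smul' c X := by simp [smul_mulVec, dotProduct_smul]

/-- two-sided multiplication as a linear map -/
def conjLM (L : Matrix (Fin N) (Fin N) ℝ) :
    Matrix (Fin N) (Fin N) ℝ →ₗ[ℝ] Matrix (Fin N) (Fin N) ℝ where
  toFun X := Lᵀ * X * L
  map_add' X Y := by noncomm_ring
  map_smul' c X := by simp [Matrix.mul_smul, Matrix.smul_mul]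

lemma hasSum_lin {E F : Type*} [AddCommGroup E] [Module ℝ E] [TopologicalSpace E]
    [IsTopologicalAddGroup E] [ContinuousSMul ℝ E] [T2Space E] [FiniteDimensional ℝ E]
    [AddCommGroup F] [Module ℝ F] [TopologicalSpace F] [IsTopologicalAddGroup F] [ContinuousSMul ℝ F]
    {f : ℕ → E} {a : E} (lin : E →ₗ[ℝ] F) (h : HasSum f a) :
    HasSum (fun k => lin (f k)) (lin a) :=
  h.map lin.toAddMonoidHom lin.continuous_of_finiteDimensional

lemma spectrum_transpose {𝕜 : Type*} [Field 𝕜] {m : Type*} [Fintype m] [DecidableEq m]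
    (M : Matrix m m 𝕜) : spectrum 𝕜 Mᵀ = spectrum 𝕜 M := by
  ext z
  rw [spectrum.mem_iff, spectrum.mem_iff]
  have h : algebraMap 𝕜 (Matrix m m 𝕜) z - Mᵀ = (algebraMap 𝕜 (Matrix m m 𝕜) z - M)ᵀ := by
    rw [transpose_sub]
    congr 1
    rw [Matrix.algebraMap_eq_diagonal]
    exact (diagonal_transpose _).symm
  rw [h, Matrix.isUnit_iff_isUnit_det, Matrix.det_transpose, ← Matrix.isUnit_iff_isUnit_det]

variable (L M : Matrix (Fin N) (Fin N) ℝ)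

lemma dlyap_hasSum
    (hL : ∀ z ∈ spectrum ℂ (L.map ((↑) : ℝ → ℂ)), ‖z‖ < 1) :
    HasSum (fun k : ℕ => (L ^ k)ᵀ * M * (L ^ k)) (dlyap L M) := by
  obtain ⟨t, ht0, ht1, hev⟩ := pow_bound L hL
  have hLT : ∀ z ∈ spectrum ℂ ((Lᵀ).map ((↑) : ℝ → ℂ)), ‖z‖ < 1 := by
    intro z hz
    apply hL z
    rwa [Matrix.transpose_map, spectrum_transpose] at hz
  obtain ⟨s, hs0, hs1, hevT⟩ := pow_bound Lᵀ hLT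
  have hsum : Summable (fun k : ℕ => (L ^ k)ᵀ * M * (L ^ k)) := by
    apply Summable.of_norm_bounded_eventually_nat (g := fun k => ‖M‖ * (s * t) ^ k)
    · exact (summable_geometric_of_lt_one (by positivity) (by nlinarith)).mul_left ‖M‖
    · filter_upwards [hev, hevT] with k hk hkT
      have h1 : ‖(L ^ k)ᵀ * M * (L ^ k)‖ ≤ ‖(L ^ k)ᵀ‖ * ‖M‖ * ‖L ^ k‖ :=
        le_trans (norm_mul_le _ _) (by gcongr; exact norm_mul_le _ _)
      have h2 : ‖(L ^ k)ᵀ‖ ≤ s ^ k := by rwa [transpose_pow]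
      calc ‖(L ^ k)ᵀ * M * (L ^ k)‖ ≤ ‖(L ^ k)ᵀ‖ * ‖M‖ * ‖L ^ k‖ := h1
        _ ≤ s ^ k * ‖M‖ * t ^ k := by gcongr
        _ = ‖M‖ * (s * t) ^ k := by rw [mul_pow]; ring
  exact hsum.hasSum

lemma psd_term (hM : M.PosSemidef) (k : ℕ) : ((L ^ k)ᵀ * M * (L ^ k)).PosSemidef := by
  have := hM.conjTranspose_mul_mul_same (L ^ k)
  rwa [conjTranspose_eq_transpose_of_trivial] at this

lemma dlyap_posSemidef (hM : M.PosSemidef)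
    (h : HasSum (fun k : ℕ => (L ^ k)ᵀ * M * (L ^ k)) (dlyap L M)) :
    (dlyap L M).PosSemidef := by
  have hterm := psd_term L M hM
  refine PosSemidef.of_dotProduct_mulVec_nonneg ?_ ?_
  · rw [Matrix.IsHermitian, conjTranspose_eq_transpose_of_trivial]
    have h2 := hasSum_lin transposeLM h
    have h3 : (fun k : ℕ => transposeLM ((L ^ k)ᵀ * M * (L ^ k)))
        = fun k => (L ^ k)ᵀ * M * (L ^ k) := by
      funext k
      show ((L ^ k)ᵀ * M * (L ^ k))ᵀ = _
      have := (hterm k).1.eq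
      rwa [conjTranspose_eq_transpose_of_trivial] at this
    rw [h3] at h2
    exact h2.unique h
  · intro x
    have h2 := hasSum_lin (quadLM (star x)) h
    exact hasSum_le (fun k => by simpa [quadLM] using (hterm k).dotProduct_mulVec_nonneg (star x)) hasSum_zero h2

lemma dlyap_eq (h : HasSum (fun k : ℕ => (L ^ k)ᵀ * M * (L ^ k)) (dlyap L M)) :
    dlyap L M = Lᵀ * dlyap L M * L + M := by
  have h2 := hasSum_lin (conjLM L) h
  have h3 : (fun k : ℕ => conjLM L ((L ^ k)ᵀ * M * (L ^ k)))
      = fun k : ℕ => (L ^ (k + 1))ᵀ * M * (L ^ (k + 1)) := by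
    funext k
    show Lᵀ * ((L ^ k)ᵀ * M * (L ^ k)) * L = _
    rw [pow_succ, transpose_mul]
    noncomm_ring
  rw [h3] at h2
  have h4 := (hasSum_nat_add_iff (f := fun k : ℕ => (L ^ k)ᵀ * M * (L ^ k)) 1).mp h2
  simp only [Finset.range_one, Finset.sum_singleton, pow_zero, transpose_one, one_mul,
    mul_one] at h4
  exact h.unique h4

end Dlyap


section Eigen
variable {N : ℕ} {A : Matrix (Fin N) (Fin N) ℝ}

lemma conj_diag_eig (hA : A.IsHermitian) (c : ℝ) :
    A - c • 1 = (hA.eigenvectorUnitary : Matrix (Fin N) (Fin N) ℝ) *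
      (diagonal (fun i => hA.eigenvalues i - c)) *
      star (hA.eigenvectorUnitary : Matrix (Fin N) (Fin N) ℝ) := by
  have hU : (hA.eigenvectorUnitary : Matrix (Fin N) (Fin N) ℝ) *
      star (hA.eigenvectorUnitary : Matrix (Fin N) (Fin N) ℝ) = 1 :=
    Matrix.mem_unitaryGroup_iff.mp hA.eigenvectorUnitary.2
  have hd : (diagonal (fun i => hA.eigenvalues i - c) : Matrix (Fin N) (Fin N) ℝ)
      = diagonal (RCLike.ofReal ∘ hA.eigenvalues) - c • 1 := by
    rw [Matrix.smul_one_eq_diagonal, ← diagonal_sub]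
    congr 1
  rw [hd, Matrix.mul_sub, Matrix.sub_mul]
  congr 1
  · convert hA.spectral_theorem using 2; rfl
  · rw [Matrix.mul_smul, Matrix.smul_mul, mul_one, hU]

lemma sub_smul_one_posSemidef (hA : A.IsHermitian) {c : ℝ}
    (h : ∀ i, c ≤ hA.eigenvalues i) : (A - c • 1).PosSemidef := by
  rw [conj_diag_eig hA c]
  have hd : (diagonal (fun i => hA.eigenvalues i - c) : Matrix (Fin N) (Fin N) ℝ).PosSemidef :=
    Matrix.posSemidef_diagonal_iff.mpr fun i => sub_nonneg.2 (h i)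
  have := hd.mul_mul_conjTranspose_same (hA.eigenvectorUnitary : Matrix (Fin N) (Fin N) ℝ)
  rwa [← Matrix.star_eq_conjTranspose] at this

lemma smul_one_sub_posSemidef (hA : A.IsHermitian) {c : ℝ}
    (h : ∀ i, hA.eigenvalues i ≤ c) : (c • 1 - A).PosSemidef := by
  have h2 : c • (1 : Matrix (Fin N) (Fin N) ℝ) - A
      = (hA.eigenvectorUnitary : Matrix (Fin N) (Fin N) ℝ) *
        (diagonal (fun i => c - hA.eigenvalues i)) *
        star (hA.eigenvectorUnitary : Matrix (Fin N) (Fin N) ℝ) := by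
    have hU : (hA.eigenvectorUnitary : Matrix (Fin N) (Fin N) ℝ) *
        star (hA.eigenvectorUnitary : Matrix (Fin N) (Fin N) ℝ) = 1 :=
      Matrix.mem_unitaryGroup_iff.mp hA.eigenvectorUnitary.2
    have hd : (diagonal (fun i => c - hA.eigenvalues i) : Matrix (Fin N) (Fin N) ℝ)
        = c • 1 - diagonal (RCLike.ofReal ∘ hA.eigenvalues) := by
      rw [Matrix.smul_one_eq_diagonal, ← diagonal_sub]
      congr 1
    rw [hd, Matrix.mul_sub, Matrix.sub_mul]
    congr 1
    · rw [Matrix.mul_smul, Matrix.smul_mul, mul_one, hU]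
    · convert hA.spectral_theorem using 2; rfl
  rw [h2]
  have hd : (diagonal (fun i => c - hA.eigenvalues i) : Matrix (Fin N) (Fin N) ℝ).PosSemidef :=
    Matrix.posSemidef_diagonal_iff.mpr fun i => sub_nonneg.2 (h i)
  have := hd.mul_mul_conjTranspose_same (hA.eigenvectorUnitary : Matrix (Fin N) (Fin N) ℝ)
  rwa [← Matrix.star_eq_conjTranspose] at this

lemma psd_dot_le {B : Matrix (Fin N) (Fin N) ℝ} (h : (B - A).PosSemidef) (x : Fin N → ℝ) :
    x ⬝ᵥ (A *ᵥ x) ≤ x ⬝ᵥ (B *ᵥ x) := by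
  have := h.dotProduct_mulVec_nonneg x
  rw [star_trivial, sub_mulVec, dotProduct_sub] at this
  linarith

lemma smul_psd_dot (c : ℝ) (h : (A - c • 1).PosSemidef) (x : Fin N → ℝ) :
    c * (x ⬝ᵥ x) ≤ x ⬝ᵥ (A *ᵥ x) := by
  have h2 := psd_dot_le h x
  rwa [smul_mulVec, one_mulVec, dotProduct_smul, smul_eq_mul] at h2

lemma lamMin_le_eig (hA : A.IsHermitian) (i : Fin N) : lamMin A ≤ hA.eigenvalues i :=
  csInf_le (Matrix.finite_spectrum A).bddBelow (hA.eigenvalues_mem_spectrum_real i)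

lemma eig_le_lamMax (hA : A.IsHermitian) (i : Fin N) : hA.eigenvalues i ≤ lamMax A :=
  le_csSup (Matrix.finite_spectrum A).bddAbove (hA.eigenvalues_mem_spectrum_real i)

lemma lamMin_psd (hA : A.IsHermitian) : (A - lamMin A • 1).PosSemidef :=
  sub_smul_one_posSemidef hA (lamMin_le_eig hA)

lemma lamMin_dot (hA : A.IsHermitian) (x : Fin N → ℝ) :
    lamMin A * (x ⬝ᵥ x) ≤ x ⬝ᵥ (A *ᵥ x) :=
  smul_psd_dot _ (lamMin_psd hA) x

lemma lamMax_dot (hA : A.IsHermitian) (x : Fin N → ℝ) :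
    x ⬝ᵥ (A *ᵥ x) ≤ lamMax A * (x ⬝ᵥ x) := by
  have h := psd_dot_le (smul_one_sub_posSemidef hA (eig_le_lamMax hA)) x
  rwa [smul_mulVec, one_mulVec, dotProduct_smul, smul_eq_mul] at h

lemma lamMin_eq_eig [Nonempty (Fin N)] (hA : A.IsHermitian) :
    ∃ i, lamMin A = hA.eigenvalues i := by
  have h1 : lamMin A ∈ spectrum ℝ A :=
    (hA.spectrum_real_eq_range_eigenvalues ▸ Set.range_nonempty _ :
      (spectrum ℝ A).Nonempty).csInf_mem (Matrix.finite_spectrum A)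
  rw [hA.spectrum_real_eq_range_eigenvalues] at h1
  obtain ⟨i, hi⟩ := h1
  exact ⟨i, hi.symm⟩

lemma lamMin_pos [Nonempty (Fin N)] (hA : A.PosDef) : 0 < lamMin A := by
  obtain ⟨i, hi⟩ := lamMin_eq_eig hA.1
  rw [hi]; exact hA.eigenvalues_pos i

lemma lamMin_nonneg [Nonempty (Fin N)] (hA : A.PosSemidef) : 0 ≤ lamMin A := by
  obtain ⟨i, hi⟩ := lamMin_eq_eig hA.1
  rw [hi]; exact hA.eigenvalues_nonneg i

lemma lamMax_nonneg [Nonempty (Fin N)] (hA : A.PosSemidef) : 0 ≤ lamMax A := by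
  inhabit (Fin N)
  exact le_trans (hA.eigenvalues_nonneg default) (eig_le_lamMax hA.1 default)

lemma lamMin_le_one [Nonempty (Fin N)] (hA : A.IsHermitian)
    (h : ((1 : Matrix (Fin N) (Fin N) ℝ) - A).PosSemidef) : lamMin A ≤ 1 := by
  obtain ⟨i, hi⟩ := lamMin_eq_eig hA
  set v : Fin N → ℝ := ⇑(hA.eigenvectorBasis i) with hv
  have hvne : v ≠ 0 := by
    intro h0
    have := hA.eigenvectorBasis.orthonormal.1 i
    rw [hv] at h0
    have : ‖hA.eigenvectorBasis i‖ = 0 := by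
      have : (hA.eigenvectorBasis i : EuclideanSpace ℝ (Fin N)) = 0 := by
        apply PiLp.ext; intro j; exact congrFun h0 j
      rw [this, norm_zero]
    simp_all
  have hvv : 0 < v ⬝ᵥ v := by
    have := (Matrix.dotProduct_star_self_pos_iff (v := v)).mpr hvne
    rwa [star_trivial] at this
  have heig : A *ᵥ v = hA.eigenvalues i • v := hA.mulVec_eigenvectorBasis i
  have h2 := psd_dot_le h v
  rw [heig, dotProduct_smul, smul_eq_mul, one_mulVec] at h2
  rw [hi]
  nlinarith
end Eigen


section MainAux
variable {N : ℕ}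

lemma dot_conj (L V : Matrix (Fin N) (Fin N) ℝ) (x : Fin N → ℝ) :
    x ⬝ᵥ ((Lᵀ * V * L) *ᵥ x) = (L *ᵥ x) ⬝ᵥ (V *ᵥ (L *ᵥ x)) := by
  rw [← Matrix.mulVec_mulVec, ← Matrix.mulVec_mulVec, Matrix.dotProduct_mulVec,
    Matrix.vecMul_transpose]

lemma sqrt_pow_nat (x : ℝ) (n : ℕ) (h : 0 ≤ x) :
    Real.sqrt (x ^ n) = (Real.sqrt x) ^ n := by
  induction n with
  | zero => simp
  | succ k ih => rw [pow_succ, pow_succ, ← ih, Real.sqrt_mul (by positivity)]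

set_option maxHeartbeats 1200000

/-- Ordered value functions give a uniform exponential stability bound. -/
theorem ordered_stability {n d : ℕ}
    (A : Matrix (Fin n) (Fin n) ℝ) (B : Matrix (Fin n) (Fin d) ℝ)
    (K K₀ : Matrix (Fin d) (Fin n) ℝ)
    (S : Matrix (Fin n) (Fin n) ℝ) (R : Matrix (Fin d) (Fin d) ℝ)
    (hS : S.PosDef) (hR : R.PosSemidef)
    (hK : Stabilizes A B K) (hK₀ : Stabilizes A B K₀)
    (V V₀ : Matrix (Fin n) (Fin n) ℝ)
    (hV : V = dlyap (A + B * K) (S + Kᵀ * R * K))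
    (hV₀ : V₀ = dlyap (A + B * K₀) (S + K₀ᵀ * R * K₀))
    (hord : (V₀ - V).PosSemidef) :
    ∀ k : ℕ, opNorm ((A + B * K) ^ k) ≤
      Real.sqrt (lamMax V₀ / lamMin S) * Real.sqrt (1 - lamMin (V₀⁻¹ * S)) ^ k := by
  intro k
  have hC0 : 0 ≤ Real.sqrt (lamMax V₀ / lamMin S) * Real.sqrt (1 - lamMin (V₀⁻¹ * S)) ^ k := by
    positivity
  rcases Nat.eq_zero_or_pos n with hn | hn
  · subst hn
    apply ContinuousLinearMap.opNorm_le_bound _ hC0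
    intro v
    have hv : v = 0 := by
      apply PiLp.ext; intro i; exact absurd i.2 (by omega)
    rw [hv]
    simp [hC0]
  -- main case
  haveI : Nonempty (Fin n) := Fin.pos_iff_nonempty.mp hn
  set L := A + B * K with hL
  -- matrices
  have hRK : (Kᵀ * R * K).PosSemidef := by
    have := hR.conjTranspose_mul_mul_same K
    rwa [conjTranspose_eq_transpose_of_trivial] at this
  have hRK₀ : (K₀ᵀ * R * K₀).PosSemidef := by
    have := hR.conjTranspose_mul_mul_same K₀
    rwa [conjTranspose_eq_transpose_of_trivial] at this
  have hM : (S + Kᵀ * R * K).PosSemidef := hS.posSemidef.add hRK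
  have hM₀ : (S + K₀ᵀ * R * K₀).PosSemidef := hS.posSemidef.add hRK₀
  have hsum := dlyap_hasSum L (S + Kᵀ * R * K) hK
  have hsum₀ := dlyap_hasSum (A + B * K₀) (S + K₀ᵀ * R * K₀) hK₀
  have hVpsd : V.PosSemidef := by rw [hV]; exact dlyap_posSemidef _ _ hM hsum
  have hV₀psd : V₀.PosSemidef := by rw [hV₀]; exact dlyap_posSemidef _ _ hM₀ hsum₀
  have hVeq : V = Lᵀ * V * L + (S + Kᵀ * R * K) := by
    rw [hV]; exact dlyap_eq _ _ hsum
  have hV₀eq : V₀ = (A + B * K₀)ᵀ * V₀ * (A + B * K₀) + (S + K₀ᵀ * R * K₀) := by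
    rw [hV₀]; exact dlyap_eq _ _ hsum₀
  have hLVL : (Lᵀ * V * L).PosSemidef := by
    have := hVpsd.conjTranspose_mul_mul_same L
    rwa [conjTranspose_eq_transpose_of_trivial] at this
  have hVS : (V - S).PosSemidef := by
    have h1 : V - S = Lᵀ * V * L + Kᵀ * R * K := by
      conv_lhs => rw [hVeq]
      abel
    rw [h1]; exact hLVL.add hRK
  have hV₀S : (V₀ - S).PosSemidef := by
    have hp : ((A + B * K₀)ᵀ * V₀ * (A + B * K₀)).PosSemidef := by
      have := hV₀psd.conjTranspose_mul_mul_same (A + B * K₀)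
      rwa [conjTranspose_eq_transpose_of_trivial] at this
    have h1 : V₀ - S = (A + B * K₀)ᵀ * V₀ * (A + B * K₀) + K₀ᵀ * R * K₀ := by
      conv_lhs => rw [hV₀eq]
      abel
    rw [h1]; exact hp.add hRK₀
  have hV₀pd : V₀.PosDef := by
    have := hS.add_posSemidef hV₀S
    rwa [show S + (V₀ - S) = V₀ from by abel] at this
  -- square root of V₀
  obtain ⟨T, hTT, hTH⟩ : ∃ T : Matrix (Fin n) (Fin n) ℝ, T * T = V₀ ∧ T.IsHermitian :=
    open MatrixOrder in
    ⟨CFC.sqrt V₀, CFC.sqrt_mul_sqrt_self V₀ hV₀pd.posSemidef.nonneg,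
      (CFC.sqrt_nonneg V₀).posSemidef.1⟩
  have hdet : IsUnit T.det := by
    have h1 : T.det * T.det = V₀.det := by rw [← Matrix.det_mul, hTT]
    have h2 : V₀.det ≠ 0 := ne_of_gt hV₀pd.det_pos
    have : T.det ≠ 0 := fun h => h2 (by rw [← h1, h, mul_zero])
    exact isUnit_iff_ne_zero.mpr this
  have hTi : T * T⁻¹ = 1 := Matrix.mul_nonsing_inv T hdet
  have hiT : T⁻¹ * T = 1 := Matrix.nonsing_inv_mul T hdet
  have hTiH : T⁻¹.IsHermitian := hTH.inv
  obtain ⟨W, hW⟩ : ∃ W : Matrix (Fin n) (Fin n) ℝ, W = T⁻¹ * S * T⁻¹ := ⟨_, rfl⟩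
  have hWpsd : W.PosSemidef := by
    rw [hW]
    have := hS.posSemidef.conjTranspose_mul_mul_same T⁻¹
    rwa [conjTranspose_eq_transpose_of_trivial, show T⁻¹ᵀ = T⁻¹ from by
      rw [← conjTranspose_eq_transpose_of_trivial]; exact hTiH] at this
  have hspec : lamMin (V₀⁻¹ * S) = lamMin W := by
    unfold lamMin
    congr 1
    have hu : IsUnit T := (Matrix.isUnit_iff_isUnit_det T).mpr hdet
    have key : (hu.unit : Matrix (Fin n) (Fin n) ℝ) * (V₀⁻¹ * S) * (hu.unit⁻¹ :
        (Matrix (Fin n) (Fin n) ℝ)ˣ) = W := by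
      rw [Matrix.coe_units_inv, hu.unit_spec]
      rw [← hTT, Matrix.mul_inv_rev]
      calc T * (T⁻¹ * T⁻¹ * S) * T⁻¹ = (T * T⁻¹) * (T⁻¹ * S * T⁻¹) := by
            simp only [Matrix.mul_assoc]
        _ = W := by rw [hTi, Matrix.one_mul, hW]
    calc spectrum ℝ (V₀⁻¹ * S)
        = spectrum ℝ ((hu.unit : Matrix (Fin n) (Fin n) ℝ) * (V₀⁻¹ * S) *
            (hu.unit⁻¹ : (Matrix (Fin n) (Fin n) ℝ)ˣ)) := (spectrum.units_conjugate).symm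
      _ = spectrum ℝ W := by rw [key]
  set c := lamMin (V₀⁻¹ * S) with hc
  have hcW : c = lamMin W := hspec
  have hc0 : 0 ≤ c := hcW ▸ lamMin_nonneg hWpsd
  have hW1 : ((1 : Matrix (Fin n) (Fin n) ℝ) - W).PosSemidef := by
    have hp := hV₀S.conjTranspose_mul_mul_same T⁻¹
    rw [conjTranspose_eq_transpose_of_trivial, show T⁻¹ᵀ = T⁻¹ from by
      rw [← conjTranspose_eq_transpose_of_trivial]; exact hTiH] at hp
    have key : T⁻¹ * (V₀ - S) * T⁻¹ = 1 - W := by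
      rw [Matrix.mul_sub, Matrix.sub_mul, hW]
      congr 1
      rw [← hTT]
      calc T⁻¹ * (T * T) * T⁻¹ = (T⁻¹ * T) * (T * T⁻¹) := by simp only [Matrix.mul_assoc]
        _ = 1 := by rw [hiT, hTi, Matrix.one_mul]
    rwa [key] at hp
  have hc1 : c ≤ 1 := hcW ▸ lamMin_le_one hWpsd.1 hW1
  have hScV₀ : (S - c • V₀).PosSemidef := by
    have hWc : (W - c • 1).PosSemidef := hcW ▸ lamMin_psd hWpsd.1
    have hp := hWc.conjTranspose_mul_mul_same T
    rw [conjTranspose_eq_transpose_of_trivial, show Tᵀ = T from by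
      rw [← conjTranspose_eq_transpose_of_trivial]; exact hTH] at hp
    have key : T * (W - c • 1) * T = S - c • V₀ := by
      rw [Matrix.mul_sub, Matrix.sub_mul]
      congr 1
      · calc T * W * T = T * (T⁻¹ * S * T⁻¹) * T := by rw [hW]
          _ = (T * T⁻¹) * S * (T⁻¹ * T) := by simp only [Matrix.mul_assoc]
          _ = S := by rw [hTi, hiT, Matrix.one_mul, Matrix.mul_one]
      · rw [Matrix.mul_smul, Matrix.smul_mul, Matrix.mul_one, hTT]
    rwa [key] at hp
  -- the one-step contraction
  have key1 : ∀ x : Fin n → ℝ, (L *ᵥ x) ⬝ᵥ (V *ᵥ (L *ᵥ x)) ≤ (1 - c) * (x ⬝ᵥ (V *ᵥ x)) := by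
    intro x
    have e1 : x ⬝ᵥ (V *ᵥ x) = (L *ᵥ x) ⬝ᵥ (V *ᵥ (L *ᵥ x)) + x ⬝ᵥ (S *ᵥ x)
        + x ⬝ᵥ ((Kᵀ * R * K) *ᵥ x) := by
      conv_lhs => rw [hVeq]
      rw [Matrix.add_mulVec, Matrix.add_mulVec, dotProduct_add, dotProduct_add, dot_conj]
      ring
    have h2a : c * (x ⬝ᵥ (V *ᵥ x)) ≤ c * (x ⬝ᵥ (V₀ *ᵥ x)) :=
      mul_le_mul_of_nonneg_left (psd_dot_le hord x) hc0
    have h2b : c * (x ⬝ᵥ (V₀ *ᵥ x)) ≤ x ⬝ᵥ (S *ᵥ x) := by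
      have := psd_dot_le hScV₀ x
      rwa [smul_mulVec, dotProduct_smul, smul_eq_mul] at this
    have h3 : 0 ≤ x ⬝ᵥ ((Kᵀ * R * K) *ᵥ x) := by
      have := hRK.dotProduct_mulVec_nonneg x
      rwa [star_trivial] at this
    nlinarith [h2a, h2b, h3, e1]
  -- iterate
  have keyk : ∀ (x : Fin n → ℝ) (j : ℕ),
      (L ^ j *ᵥ x) ⬝ᵥ (V *ᵥ (L ^ j *ᵥ x)) ≤ (1 - c) ^ j * (x ⬝ᵥ (V *ᵥ x)) := by
    intro x j
    induction j with
    | zero => simp [Matrix.one_mulVec]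
    | succ m ih =>
      have h1 : L ^ (m + 1) *ᵥ x = L *ᵥ (L ^ m *ᵥ x) := by
        rw [pow_succ', ← Matrix.mulVec_mulVec]
      rw [h1]
      calc (L *ᵥ (L ^ m *ᵥ x)) ⬝ᵥ (V *ᵥ (L *ᵥ (L ^ m *ᵥ x)))
          ≤ (1 - c) * ((L ^ m *ᵥ x) ⬝ᵥ (V *ᵥ (L ^ m *ᵥ x))) := key1 _
        _ ≤ (1 - c) * ((1 - c) ^ m * (x ⬝ᵥ (V *ᵥ x))) :=
            mul_le_mul_of_nonneg_left ih (by linarith)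
        _ = (1 - c) ^ (m + 1) * (x ⬝ᵥ (V *ᵥ x)) := by ring
  have hlamS : 0 < lamMin S := lamMin_pos hS
  have hlamV₀ : 0 ≤ lamMax V₀ := lamMax_nonneg hV₀psd
  -- quadratic bound
  have quad : ∀ x : Fin n → ℝ, (L ^ k *ᵥ x) ⬝ᵥ (L ^ k *ᵥ x)
      ≤ (lamMax V₀ / lamMin S) * ((1 - c) ^ k * (x ⬝ᵥ x)) := by
    intro x
    set y := L ^ k *ᵥ x with hy
    have h1 : lamMin S * (y ⬝ᵥ y) ≤ y ⬝ᵥ (S *ᵥ y) := lamMin_dot hS.1 y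
    have h2 : y ⬝ᵥ (S *ᵥ y) ≤ y ⬝ᵥ (V *ᵥ y) := psd_dot_le hVS y
    have h3 : y ⬝ᵥ (V *ᵥ y) ≤ (1 - c) ^ k * (x ⬝ᵥ (V *ᵥ x)) := keyk x k
    have h4 : x ⬝ᵥ (V *ᵥ x) ≤ x ⬝ᵥ (V₀ *ᵥ x) := psd_dot_le hord x
    have h5 : x ⬝ᵥ (V₀ *ᵥ x) ≤ lamMax V₀ * (x ⬝ᵥ x) := lamMax_dot hV₀psd.1 x
    have hpk : (0:ℝ) ≤ (1 - c) ^ k := pow_nonneg (by linarith) k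
    have h6 : y ⬝ᵥ (V *ᵥ y) ≤ (1 - c) ^ k * (lamMax V₀ * (x ⬝ᵥ x)) := by
      calc y ⬝ᵥ (V *ᵥ y) ≤ (1 - c) ^ k * (x ⬝ᵥ (V *ᵥ x)) := h3
        _ ≤ (1 - c) ^ k * (lamMax V₀ * (x ⬝ᵥ x)) := by
            apply mul_le_mul_of_nonneg_left _ hpk
            linarith
    have h7 : lamMin S * (y ⬝ᵥ y) ≤ (1 - c) ^ k * (lamMax V₀ * (x ⬝ᵥ x)) := by linarith
    rw [div_mul_eq_mul_div, le_div_iff₀ hlamS]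
    nlinarith [h7]
  -- operator norm bound
  have hdot : ∀ (w : EuclideanSpace ℝ (Fin n)), ‖w‖
      = Real.sqrt ((fun i => w i) ⬝ᵥ (fun i => w i)) := by
    intro w
    rw [EuclideanSpace.norm_eq]
    congr 1
    rw [dotProduct]
    refine Finset.sum_congr rfl fun i _ => ?_
    rw [Real.norm_eq_abs, sq_abs, sq]
  apply ContinuousLinearMap.opNorm_le_bound _ hC0
  intro v
  set xv : Fin n → ℝ := (WithLp.equiv 2 (Fin n → ℝ)) v with hxv
  have hx0 : (0:ℝ) ≤ xv ⬝ᵥ xv := Finset.sum_nonneg fun i _ => mul_self_nonneg _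
  have h1 : ‖(LinearMap.toContinuousLinearMap (Matrix.toEuclideanLin (L ^ k))) v‖
      = Real.sqrt ((L ^ k *ᵥ xv) ⬝ᵥ (L ^ k *ᵥ xv)) := by
    rw [hdot]; rfl
  have h2 : ‖v‖ = Real.sqrt (xv ⬝ᵥ xv) := by rw [hdot]; rfl
  rw [h1, h2]
  have hq := quad xv
  have h3 := Real.sqrt_le_sqrt hq
  have hpk0 : (0:ℝ) ≤ (1 - c) ^ k := pow_nonneg (by linarith) k
  rw [Real.sqrt_mul (div_nonneg hlamV₀ hlamS.le), Real.sqrt_mul hpk0,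
    sqrt_pow_nat _ _ (by linarith)] at h3
  calc Real.sqrt ((L ^ k *ᵥ xv) ⬝ᵥ (L ^ k *ᵥ xv))
      ≤ Real.sqrt (lamMax V₀ / lamMin S) * (Real.sqrt (1 - c) ^ k
        * Real.sqrt (xv ⬝ᵥ xv)) := h3
    _ = Real.sqrt (lamMax V₀ / lamMin S) * Real.sqrt (1 - c) ^ k
        * Real.sqrt (xv ⬝ᵥ xv) := by ring
end MainAux

end AuxPow
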